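/- Let G be a flower group with pistil C₀. Then C₀ is contained in the center Z(G) of G. -/

import Mathlib

/-- A cyclic subgroup `C` of `G` is a μ-subgroup if it is not contained in any cyclic
subgroup of `G` other than `C` itself. -/
def IsMuSubgroup {G : Type*} [Group G] (C : Subgroup G) : Prop :=
  IsCyclic ↥C ∧ ∀ K : Subgroup G, IsCyclic ↥K → C ≤ K → C = K

/-- A noncyclic group `G` is a flower group with pistil `C0` if any two distinct
μ-subgroups of `G` intersect exactly in `C0`. -/
def IsFlowerGroup {G : Type*} [Group G] (C0 : Subgroup G) : Prop :=
  ¬ IsCyclic G ∧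
    ∀ C C' : Subgroup G, IsMuSubgroup C → IsMuSubgroup C' → C ≠ C' → C ⊓ C' = C0

/-- Every element of a finite group lies in some μ-subgroup. -/
lemma exists_mu_mem {G : Type*} [Group G] [Finite G] (x : G) :
    ∃ C : Subgroup G, IsMuSubgroup C ∧ x ∈ C := by
  have hfin : (Set.univ : Set (Subgroup G)).Finite := Set.finite_univ
  set S : Set (Subgroup G) := {K | IsCyclic ↥K ∧ x ∈ K} with hS
  have hSfin : S.Finite := hfin.subset (Set.subset_univ _)
  have hcyc : IsCyclic ↥(Subgroup.zpowers x) := by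
    refine ⟨⟨⟨x, Subgroup.mem_zpowers x⟩, ?_⟩⟩
    rintro ⟨y, hy⟩
    obtain ⟨n, hn⟩ := Subgroup.mem_zpowers_iff.mp hy
    exact ⟨n, Subtype.ext (by push_cast; exact hn)⟩
  have hne : S.Nonempty := ⟨Subgroup.zpowers x, hcyc, Subgroup.mem_zpowers x⟩
  obtain ⟨C, hCS, hmax⟩ := hSfin.exists_maximal hne
  refine ⟨C, ⟨hCS.1, ?_⟩, hCS.2⟩
  intro K hK hle
  exact le_antisymm hle (hmax ⟨hK, hle hCS.2⟩ hle)

theorem stmt8 {G : Type*} [Group G] [Finite G] (C0 : Subgroup G)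
    (hG : IsFlowerGroup C0) :
    C0 ≤ Subgroup.center G := by
  obtain ⟨hnc, hflower⟩ := hG
  -- there exist two distinct μ-subgroups
  obtain ⟨C1, hC1, -⟩ := exists_mu_mem (1 : G)
  have hex : ∃ C2 : Subgroup G, IsMuSubgroup C2 ∧ C2 ≠ C1 := by
    by_contra h
    push_neg at h
    have htop : C1 = ⊤ := by
      ext y
      simp only [Subgroup.mem_top, iff_true]
      obtain ⟨C, hC, hy⟩ := exists_mu_mem y
      rcases eq_or_ne C C1 with rfl | hne
      · exact hy
      · exact absurd (h C hC) (by simpa using hne)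
    haveI : IsCyclic (↥(⊤ : Subgroup G)) := htop ▸ hC1.1
    exact hnc (isCyclic_of_surjective (Subgroup.topEquiv (G := G)).toMonoidHom
      (Subgroup.topEquiv (G := G)).surjective)
  obtain ⟨C2, hC2, hne12⟩ := hex
  -- C0 is contained in every μ-subgroup
  have hC0le : ∀ C : Subgroup G, IsMuSubgroup C → C0 ≤ C := by
    intro C hC
    rcases eq_or_ne C C1 with rfl | hne
    · rw [← hflower C C2 hC hC2 hne12.symm]; exact inf_le_left
    · rw [← hflower C C1 hC hC1 hne]; exact inf_le_left
  intro g hg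
  rw [Subgroup.mem_center_iff]
  intro x
  obtain ⟨C, hC, hx⟩ := exists_mu_mem x
  have hgC : g ∈ C := hC0le C hC hg
  obtain ⟨c, hc⟩ := hC.1.exists_generator
  obtain ⟨m, hm⟩ := Subgroup.mem_zpowers_iff.mp (hc ⟨x, hx⟩)
  obtain ⟨n, hn⟩ := Subgroup.mem_zpowers_iff.mp (hc ⟨g, hgC⟩)
  have hx' : (c : G) ^ m = x := by
    have := congrArg Subtype.val hm; push_cast at this; exact this
  have hg' : (c : G) ^ n = g := by
    have := congrArg Subtype.val hn; push_cast at this; exact this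
  rw [← hx', ← hg']
  exact ((Commute.refl ((c : G))).zpow_zpow m n).eq
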